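/- Augmenting a matching M along a maximal set of vertex-disjoint shortest augmenting paths strictly increases the length of the shortest augmenting path: if every shortest augmenting path of (G,M) has length 2ℓ+1 and M' is obtained by augmenting along a maximal vertex-disjoint family of such paths, then every augmenting path of (G,M') has length at least 2ℓ+3. -/

import Mathlib

open SimpleGraph

variable {V : Type*} [Fintype V] [DecidableEq V]

/-- `M` is a matching of `G`: a set of edges of `G` that pairwise do not share endpoints. -/
def IsMatching (G : SimpleGraph V) (M : Set (Sym2 V)) : Prop :=
  M ⊆ G.edgeSet ∧ ∀ v : V, ∀ e₁ ∈ M, ∀ e₂ ∈ M, v ∈ e₁ → v ∈ e₂ → e₁ = e₂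

/-- A vertex is free if no matching edge covers it. -/
def IsFree (M : Set (Sym2 V)) (v : V) : Prop := ∀ e ∈ M, v ∉ e

/-- An alternating path with respect to the matching `M`:
a (simple) path whose consecutive edges alternate membership in `M`. -/
def IsAltPath (M : Set (Sym2 V)) {G : SimpleGraph V} {a b : V} (p : G.Walk a b) : Prop :=
  p.IsPath ∧ List.Chain' (fun e₁ e₂ => (e₁ ∈ M ↔ e₂ ∉ M)) p.edges

/-- An augmenting path: an alternating path between two distinct free vertices,
starting and ending with non-matching edges. -/
def IsAugPath (M : Set (Sym2 V)) {G : SimpleGraph V} {a b : V} (p : G.Walk a b) : Prop :=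
  IsAltPath M p ∧ IsFree M a ∧ IsFree M b ∧ a ≠ b ∧
  (∀ e, p.edges.head? = some e → e ∉ M) ∧ (∀ e, p.edges.getLast? = some e → e ∉ M)

/-- μ(G): the maximum cardinality of a matching of `G`. -/
noncomputable def matchNum (G : SimpleGraph V) : ℕ :=
  sSup {n | ∃ M : Set (Sym2 V), IsMatching G M ∧ M.ncard = n}

section helpers
variable {α : Type*}

/-- alternation chain transfers between edge sets agreeing on the list -/
lemma chain_iff_of_agree {A B : Set α} : ∀ {l : List α}, (∀ e ∈ l, (e ∈ A ↔ e ∈ B)) →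
    (List.Chain' (fun e₁ e₂ => (e₁ ∈ A ↔ e₂ ∉ A)) l ↔
     List.Chain' (fun e₁ e₂ => (e₁ ∈ B ↔ e₂ ∉ B)) l)
  | [], _ => by simp [List.Chain']
  | [e], _ => by simp [List.Chain']
  | e :: f :: l, h => by
    have ih := chain_iff_of_agree (A := A) (B := B) (l := f :: l) (fun x hx => h x (by simp [hx]))
    simp only [List.Chain'] at ih ⊢
    rw [List.isChain_cons_cons, List.isChain_cons_cons, ih]
    have he := h e (by simp); have hf := h f (by simp)
    tauto

lemma odd_alt_length {M : Set α} : ∀ {l : List α}, l ≠ [] →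
    List.Chain' (fun e₁ e₂ => (e₁ ∈ M ↔ e₂ ∉ M)) l →
    (∀ e, l.head? = some e → e ∉ M) → (∀ e, l.getLast? = some e → e ∉ M) → Odd l.length
  | [], h, _, _, _ => absurd rfl h
  | [e], _, _, _, _ => by simp [Nat.odd_iff]
  | e :: f :: l, _, hc, hh, hl => by
    simp only [List.Chain', List.isChain_cons_cons] at hc
    have he : e ∉ M := hh e rfl
    have hf : f ∈ M := by tauto
    rcases l with - | ⟨g, l⟩
    · exact absurd (hl f rfl) (by simpa using hf)
    · have := odd_alt_length (l := g :: l) (by simp)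
        (hc.2.tail)
        (fun x hx => by
          simp only [List.head?_cons, Option.some_inj] at hx
          subst hx
          have := (List.isChain_cons_cons.mp hc.2).1; tauto)
        (fun x hx => hl x (by simpa using hx))
      obtain ⟨m, hm⟩ := this
      exact ⟨m + 1, by simp only [List.length_cons] at hm ⊢; omega⟩

lemma ncard_list_set {l : List α} [DecidableEq α] (h : l.Nodup) :
    {e | e ∈ l}.ncard = l.length := by
  have : {e | e ∈ l} = ↑l.toFinset := by ext x; simp
  rw [this, Set.ncard_coe_finset, List.toFinset_card_of_nodup h]

end helpers

section walkhelpers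
variable {G : SimpleGraph V}

lemma getLast?_cons_ne {α : Type*} {l : List α} (a : α) (h : l ≠ []) :
    (a :: l).getLast? = l.getLast? := by
  cases l with
  | nil => exact absurd rfl h
  | cons b t => exact List.getLast?_cons_cons

lemma walk_edge_of_support : ∀ {u b v : V} (p : G.Walk u b), v ∈ p.support → v ≠ u →
    ∃ e ∈ p.edges, v ∈ e
  | u, _, v, .nil, hv, hne => by simp at hv; exact absurd hv hne
  | u, b, v, .cons (v := c) h q, hv, hne => by
    simp only [Walk.support_cons, List.mem_cons] at hv
    rcases hv with rfl | hv
    · exact absurd rfl hne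
    · by_cases hvc : v = c
      · exact ⟨s(u, c), by simp, by simp [hvc]⟩
      · obtain ⟨e, he, hve⟩ := walk_edge_of_support q hv hvc
        exact ⟨e, by simp [he], hve⟩

lemma end_mem_getLast : ∀ {u b : V} (p : G.Walk u b) (e : Sym2 V),
    p.edges.getLast? = some e → b ∈ e
  | u, _, .nil, e, h => by simp at h
  | u, b, .cons (v := c) h q, e, hl => by
    cases q with
    | nil =>
      simp only [Walk.edges_cons, Walk.edges_nil, List.getLast?_singleton,
        Option.some_inj] at hl
      subst hl; simp
    | cons h' q' =>
      rw [Walk.edges_cons, getLast?_cons_ne _ (by simp)] at hl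
      exact end_mem_getLast _ e hl

lemma two_edges : ∀ {u b v : V} (p : G.Walk u b), p.IsPath → v ∈ p.support → v ≠ u → v ≠ b →
    ∃ e₁ ∈ p.edges, ∃ e₂ ∈ p.edges, e₁ ≠ e₂ ∧ v ∈ e₁ ∧ v ∈ e₂
  | u, _, v, .nil, _, hv, hne, _ => by simp at hv; exact absurd hv hne
  | u, b, v, .cons (v := c) h q, hp, hv, hnu, hnb => by
    simp only [Walk.support_cons, List.mem_cons] at hv
    rcases hv with rfl | hv
    · exact absurd rfl hnu
    · by_cases hvc : v = c
      · subst hvc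
        cases q with
        | nil => exact absurd rfl hnb
        | cons h' q' =>
          rename_i d
          refine ⟨s(u, v), by simp, s(v, d), by simp, ?_, by simp, by simp⟩
          intro heq
          rw [Sym2.eq_iff] at heq
          have hu : u ∉ (Walk.cons h' q').support := by
            have := hp.support_nodup
            simp only [Walk.support_cons, List.nodup_cons] at this
            exact fun hc => this.1 (by simpa using hc)
          rcases heq with ⟨rfl, _⟩ | ⟨rfl, _⟩
          · exact G.ne_of_adj h rfl
          · exact hu (by simp)
      · obtain ⟨e₁, h₁, e₂, h₂, hne, hv₁, hv₂⟩ :=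
          two_edges q hp.of_cons hv hvc hnb
        exact ⟨e₁, by simp [h₁], e₂, by simp [h₂], hne, hv₁, hv₂⟩

lemma path_ends_ne {u b : V} {p : G.Walk u b} (hp : p.IsPath) (h : p.edges ≠ []) : u ≠ b := by
  rintro rfl
  cases p with
  | nil => simp at h
  | cons h' q =>
    have := hp.support_nodup
    simp only [Walk.support_cons, List.nodup_cons] at this
    exact this.1 (Walk.end_mem_support q)

lemma matching_subset {M K : Set (Sym2 V)} (hM : IsMatching G M) (hK : K ⊆ M) :
    IsMatching G K :=
  ⟨hK.trans hM.1, fun v e₁ h₁ e₂ h₂ => hM.2 v e₁ (hK h₁) e₂ (hK h₂)⟩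

lemma not_free_iff {M : Set (Sym2 V)} {v : V} : ¬ IsFree M v ↔ ∃ e ∈ M, v ∈ e := by
  simp [IsFree]

end walkhelpers

section augmaster
variable {G : SimpleGraph V}

theorem augMaster : ∀ (n : ℕ) {M : Set (Sym2 V)}, IsMatching G M → ∀ {a b : V}
    (p : G.Walk a b), p.length ≤ n → IsAugPath M p →
    IsMatching G (symmDiff M {e | e ∈ p.edges}) ∧
    (symmDiff M {e | e ∈ p.edges}).ncard = M.ncard + 1 ∧
    (∀ v, IsFree (symmDiff M {e | e ∈ p.edges}) v ↔ (IsFree M v ∧ v ∉ p.support)) ∧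
    (∀ v ∈ p.support, ∃ g ∈ p.edges, g ∉ M ∧ v ∈ g) ∧
    (∀ v ∈ p.support, v ≠ a → v ≠ b → ∃ g ∈ p.edges, g ∈ M ∧ v ∈ g) := by
  intro n
  induction n with
  | zero =>
    intro M hM a b p hlen hp
    cases p with
    | nil => exact absurd rfl hp.2.2.2.1
    | cons h q => simp [Walk.length_cons] at hlen
  | succ n ih =>
    intro M hM a b p hlen hp
    obtain ⟨⟨hpath, hchain⟩, ha, hb, hab, hhead, hlast⟩ := hp
    cases p with
    | nil => exact absurd rfl hab
    | @cons _ c _ h₁ q₁ =>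
      cases q₁ with
      | nil =>
        -- single edge case: walk a -- b
        have he : s(a, b) ∉ M := hhead _ (by simp)
        have hsd : symmDiff M {e | e ∈ (Walk.cons h₁ Walk.nil).edges} = insert s(a, b) M := by
          ext e
          simp only [Set.mem_symmDiff, Set.mem_setOf_eq, Walk.edges_cons, Walk.edges_nil,
            List.mem_singleton, Set.mem_insert_iff]
          by_cases hee : e = s(a, b) <;> simp [hee, he] <;> tauto
        rw [hsd]
        refine ⟨⟨?_, ?_⟩, ?_, ?_, ?_, ?_⟩
        · rintro e (rfl | heM)
          · exact h₁
          · exact hM.1 heM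
        · rintro v e₁ (rfl | h₁') e₂ (rfl | h₂') hv₁ hv₂
          · rfl
          · rcases Sym2.mem_iff.mp hv₁ with rfl | rfl
            · exact absurd hv₂ (ha e₂ h₂')
            · exact absurd hv₂ (hb e₂ h₂')
          · rcases Sym2.mem_iff.mp hv₂ with rfl | rfl
            · exact absurd hv₁ (ha e₁ h₁')
            · exact absurd hv₁ (hb e₁ h₁')
          · exact hM.2 v e₁ h₁' e₂ h₂' hv₁ hv₂
        · exact Set.ncard_insert_of_notMem he (Set.toFinite M)
        · intro v
          have hsup : (Walk.cons h₁ Walk.nil).support = [a, b] := by simp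
          rw [hsup]
          simp only [IsFree, Set.mem_insert_iff, List.mem_cons, List.mem_singleton,
            List.not_mem_nil]
          constructor
          · intro hf
            have h1 := hf s(a, b) (Or.inl rfl)
            rw [Sym2.mem_iff] at h1
            exact ⟨fun e heM => hf e (Or.inr heM), by tauto⟩
          · rintro ⟨hf, hv⟩ e (rfl | heM)
            · rw [Sym2.mem_iff]; tauto
            · exact hf e heM
        · intro v hv
          refine ⟨s(a, b), by simp, he, ?_⟩
          simp only [Walk.support_cons, Walk.support_nil, List.mem_cons,
            List.mem_singleton] at hv
          simp [Sym2.mem_iff]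
          tauto
        · intro v hv hna hnb
          simp only [Walk.support_cons, Walk.support_nil, List.mem_cons,
            List.mem_singleton] at hv
          tauto
      | @cons _ d _ h₂ q =>
        -- main case: a -- c -- d ---q--- b
        set e₁ : Sym2 V := s(a, c) with he₁def
        set e₂ : Sym2 V := s(c, d) with he₂def
        have hedges : (Walk.cons h₁ (Walk.cons h₂ q)).edges = e₁ :: e₂ :: q.edges := by simp [he₁def, he₂def]
        have he₁ : e₁ ∉ M := hhead _ (by simp [hedges])
        have hch2 : (e₁ ∈ M ↔ e₂ ∉ M) ∧
            List.Chain' (fun x y => (x ∈ M ↔ y ∉ M)) (e₂ :: q.edges) := by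
          rw [hedges] at hchain
          exact List.isChain_cons_cons.mp hchain
        have he₂ : e₂ ∈ M := by tauto
        have hnodup := hpath.support_nodup
        simp only [Walk.support_cons, List.nodup_cons, List.mem_cons] at hnodup
        have hac : a ≠ c := fun h => hnodup.1 (Or.inl h)
        have haq : a ∉ q.support := fun h => hnodup.1 (Or.inr h)
        have hcq : c ∉ q.support := hnodup.2.1
        have hdq : d ∈ q.support := q.start_mem_support
        have had : a ≠ d := fun h => haq (h ▸ hdq)
        have hcd : c ≠ d := G.ne_of_adj h₂
        have hdb : d ≠ b := fun h => hb e₂ he₂ (by rw [he₂def, h]; simp)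
        have hqe : q.edges ≠ [] := by
          cases q with
          | nil => exact absurd rfl hdb
          | cons h' q' => simp
        set M₂ : Set (Sym2 V) := insert e₁ (M \ {e₂}) with hM₂def
        have hm4 : ∀ e ∈ q.edges, (e ∈ M₂ ↔ e ∈ M) := by
          intro e he
          have hne₁ : e ≠ e₁ := by
            rintro rfl
            exact haq (q.fst_mem_support_of_mem_edges he)
          have hne₂ : e ≠ e₂ := by
            rintro rfl
            exact hcq (q.fst_mem_support_of_mem_edges he)
          simp only [hM₂def, Set.mem_insert_iff, Set.mem_diff, Set.mem_singleton_iff, hne₁,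
            hne₂, false_or, not_false_iff, and_true]
        have hM₂ : IsMatching G M₂ := by
          constructor
          · rintro e (rfl | heM)
            · exact h₁
            · exact hM.1 heM.1
          · rintro v e (rfl | heM) f (rfl | hfM) hv₁ hv₂
            · rfl
            · rcases Sym2.mem_iff.mp hv₁ with rfl | rfl
              · exact absurd hv₂ (ha f hfM.1)
              · exact absurd (hM.2 v f hfM.1 e₂ he₂ hv₂ (by simp [he₂def])) hfM.2
            · rcases Sym2.mem_iff.mp hv₂ with rfl | rfl
              · exact absurd hv₁ (ha e heM.1)
              · exact absurd (hM.2 v e heM.1 e₂ he₂ hv₁ (by simp [he₂def])) heM.2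
            · exact hM.2 v e heM.1 f hfM.1 hv₁ hv₂
        have hM₂card : M₂.ncard = M.ncard := by
          rw [hM₂def, Set.ncard_insert_of_notMem (fun h => he₁ h.1) (Set.toFinite _),
            Set.ncard_diff_singleton_add_one he₂ (Set.toFinite M)]
        have hfreeM₂ : ∀ v, IsFree M₂ v ↔ ((IsFree M v ∧ v ≠ a) ∨ v = d) := by
          intro v
          constructor
          · intro hfv
            by_cases hvd : v = d
            · exact Or.inr hvd
            · refine Or.inl ⟨?_, ?_⟩
              · intro e heM hve
                by_cases hee : e = e₂
                · subst hee
                  rcases Sym2.mem_iff.mp hve with rfl | rfl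
                  · exact hfv e₁ (Or.inl rfl) (by simp [he₁def])
                  · exact hvd rfl
                · exact hfv e (Or.inr ⟨heM, hee⟩) hve
              · rintro rfl
                exact hfv e₁ (Or.inl rfl) (by simp [he₁def])
          · rintro (⟨hfv, hva⟩ | hvd)
            · rintro e (rfl | heM) hve
              · rcases Sym2.mem_iff.mp hve with rfl | rfl
                · exact hva rfl
                · exact hfv e₂ he₂ (by simp [he₂def])
              · exact hfv e heM.1 hve
            · rintro e (rfl | heM) hde
              · rcases Sym2.mem_iff.mp hde with h | h
                · exact had (by rw [← h]; exact hvd)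
                · exact hcd (by rw [← h]; exact hvd)
              · exact heM.2 (hM.2 v e heM.1 e₂ he₂ hde (by simp [he₂def, hvd]))
        have hq_aug : IsAugPath M₂ q := by
          refine ⟨⟨hpath.of_cons.of_cons, ?_⟩, (hfreeM₂ d).mpr (Or.inr rfl),
            (hfreeM₂ b).mpr (Or.inl ⟨hb, Ne.symm hab⟩), hdb, ?_, ?_⟩
          · exact (chain_iff_of_agree hm4).mpr hch2.2.tail
          · intro e hhd
            have heq : e ∈ q.edges := List.mem_of_mem_head? hhd
            rw [hm4 e heq]
            have := (List.isChain_cons.mp hch2.2).1 e hhd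
            tauto
          · intro e hlst
            have heq : e ∈ q.edges := List.mem_of_mem_getLast? hlst
            rw [hm4 e heq]
            apply hlast
            rw [hedges, getLast?_cons_ne _ (by simp [hqe]), getLast?_cons_ne _ hqe]
            exact hlst
        have hkey : symmDiff M {e | e ∈ (Walk.cons h₁ (Walk.cons h₂ q)).edges} =
            symmDiff M₂ {e | e ∈ q.edges} := by
          have hsplit : {e | e ∈ (Walk.cons h₁ (Walk.cons h₂ q)).edges} =
              ({e₁, e₂} : Set (Sym2 V)) ∪ {e | e ∈ q.edges} := by
            ext e; simp [hedges]; tauto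
          have hdisj : Disjoint ({e₁, e₂} : Set (Sym2 V)) {e | e ∈ q.edges} := by
            rw [Set.disjoint_left]
            rintro e (rfl | rfl) he
            · exact haq (q.fst_mem_support_of_mem_edges he)
            · exact hcq (q.fst_mem_support_of_mem_edges he)
          have hM₂eq : M₂ = symmDiff M ({e₁, e₂} : Set (Sym2 V)) := by
            ext e
            rw [Set.mem_symmDiff]
            simp only [hM₂def, Set.mem_insert_iff, Set.mem_diff, Set.mem_singleton_iff]
            by_cases h1 : e = e₁ <;> by_cases h2 : e = e₂ <;>
              simp [h1, h2, he₁, he₂] <;> tauto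
          have hd' : ∀ x, x ∈ ({e₁, e₂} : Set (Sym2 V)) → x ∉ {e | e ∈ q.edges} :=
            fun x hx hc => Set.disjoint_left.mp hdisj hx hc
          have hun : ({e₁, e₂} : Set (Sym2 V)) ∪ {e | e ∈ q.edges} =
              symmDiff ({e₁, e₂} : Set (Sym2 V)) {e | e ∈ q.edges} := by
            ext x
            rw [Set.mem_symmDiff]
            have := hd' x
            simp only [Set.mem_union]
            tauto
          rw [hsplit, hun, ← symmDiff_assoc, ← hM₂eq]
        have hlen' : q.length ≤ n := by
          simp only [Walk.length_cons] at hlen; omega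
        obtain ⟨i1, i2, i3, i4, i5⟩ := ih hM₂ q hlen' hq_aug
        have hsupp : (Walk.cons h₁ (Walk.cons h₂ q)).support = a :: c :: q.support := by simp
        have hcnotfree : ¬ IsFree M c := fun h => h e₂ he₂ (by simp [he₂def])
        refine ⟨hkey ▸ i1, by rw [hkey, i2, hM₂card], ?_, ?_, ?_⟩
        · intro v
          rw [hkey, i3 v, hfreeM₂ v, hsupp]
          simp only [List.mem_cons]
          constructor
          · rintro ⟨⟨h1, h2⟩ | rfl, h3⟩
            · push_neg
              exact ⟨h1, h2, fun h => hcnotfree (h ▸ h1), h3⟩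
            · exact absurd hdq h3
          · rintro ⟨h1, h2⟩
            push_neg at h2
            exact ⟨Or.inl ⟨h1, h2.1⟩, h2.2.2⟩
        · intro v hv
          rw [hsupp] at hv
          simp only [List.mem_cons] at hv
          rcases hv with rfl | rfl | hv
          · exact ⟨e₁, by simp [hedges], he₁, by simp [he₁def]⟩
          · exact ⟨e₁, by simp [hedges], he₁, by simp [he₁def]⟩
          · obtain ⟨g, hg, hgM₂, hvg⟩ := i4 v hv
            exact ⟨g, by simp [hedges, hg], fun h => hgM₂ ((hm4 g hg).mpr h), hvg⟩
        · intro v hv hna hnb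
          rw [hsupp] at hv
          simp only [List.mem_cons] at hv
          rcases hv with rfl | rfl | hv
          · exact absurd rfl hna
          · exact ⟨e₂, by simp [hedges], he₂, by simp [he₂def]⟩
          · by_cases hvd : v = d
            · exact ⟨e₂, by simp [hedges], he₂, by simp [he₂def, hvd]⟩
            · obtain ⟨g, hg, hgM₂, hvg⟩ := i5 v hv hvd hnb
              exact ⟨g, by simp [hedges, hg], (hm4 g hg).mp hgM₂, hvg⟩

end augmaster

section covdet
variable {G : SimpleGraph V}

lemma cov_ncard : ∀ (n : ℕ) {M : Set (Sym2 V)}, M.ncard ≤ n → IsMatching G M →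
    {v | ∃ e ∈ M, v ∈ e}.ncard = 2 * M.ncard := by
  intro n
  induction n with
  | zero =>
    intro M hle hM
    have : M = ∅ := by
      rw [← Set.ncard_eq_zero (Set.toFinite M)]; omega
    subst this; simp
  | succ n ih =>
    intro M hle hM
    rcases Set.eq_empty_or_nonempty M with rfl | ⟨e, he⟩
    · simp
    · obtain ⟨x, y, rfl⟩ : ∃ x y, e = s(x, y) := by
        induction e using Sym2.ind with
        | _ x y => exact ⟨x, y, rfl⟩
      · have hxy : x ≠ y := G.ne_of_adj (hM.1 he)
        set M' : Set (Sym2 V) := M \ {s(x, y)} with hM'def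
        have hM' : IsMatching G M' := matching_subset hM Set.diff_subset
        have hM'card : M'.ncard + 1 = M.ncard :=
          Set.ncard_diff_singleton_add_one he (Set.toFinite M)
        have hxcov : x ∉ {v | ∃ e ∈ M', v ∈ e} := by
          rintro ⟨f, hf, hxf⟩
          exact hf.2 (hM.2 x f hf.1 s(x, y) he hxf (by simp))
        have hycov : y ∉ {v | ∃ e ∈ M', v ∈ e} := by
          rintro ⟨f, hf, hyf⟩
          exact hf.2 (hM.2 y f hf.1 s(x, y) he hyf (by simp))
        have hsplit : {v | ∃ e ∈ M, v ∈ e} =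
            insert x (insert y {v | ∃ e ∈ M', v ∈ e}) := by
          ext v
          simp only [Set.mem_setOf_eq, Set.mem_insert_iff]
          constructor
          · rintro ⟨f, hf, hvf⟩
            by_cases hfe : f = s(x, y)
            · subst hfe
              rcases Sym2.mem_iff.mp hvf with rfl | rfl
              · exact Or.inl rfl
              · exact Or.inr (Or.inl rfl)
            · exact Or.inr (Or.inr ⟨f, ⟨hf, hfe⟩, hvf⟩)
          · rintro (h | h | ⟨f, hf, hvf⟩)
            · exact ⟨s(x, y), he, by simp [h]⟩
            · exact ⟨s(x, y), he, by simp [h]⟩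
            · exact ⟨f, hf.1, hvf⟩
        rw [hsplit, Set.ncard_insert_of_notMem (by simp [hxy, hycov, hxcov]) (Set.toFinite _),
          Set.ncard_insert_of_notMem hycov (Set.toFinite _),
          ih (by omega) hM']
        omega

lemma det {K N : Set (Sym2 V)} (hK : IsMatching G K) (hN : IsMatching G N)
    (hd : ∀ e, e ∈ K → e ∈ N → False) :
    ∀ (n : ℕ) {b u u' : V} (q : G.Walk b u) (q' : G.Walk b u'),
      q.length ≤ n →
      List.Chain' (fun x y => (x ∈ K ↔ y ∉ K)) q.edges →
      List.Chain' (fun x y => (x ∈ K ↔ y ∉ K)) q'.edges →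
      (∀ e ∈ q.edges, e ∈ K ∪ N) → (∀ e ∈ q'.edges, e ∈ K ∪ N) →
      (∀ e, q.edges.head? = some e → e ∈ K) → (∀ e, q'.edges.head? = some e → e ∈ K) →
      q.edges ≠ [] → q'.edges ≠ [] →
      IsFree K u → IsFree K u' → u = u' := by
  intro n
  induction n with
  | zero =>
    intro b u u' q q' hlen _ _ _ _ _ _ hq _ _ _
    cases q with
    | nil => exact absurd rfl hq
    | cons h r => simp at hlen
  | succ n ih =>
    intro b u u' q q' hlen hc hc' hm hm' hh hh' hne hne' hf hf'
    cases q with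
    | nil => exact absurd rfl hne
    | @cons _ c _ h r =>
      cases q' with
      | nil => exact absurd rfl hne'
      | @cons _ c' _ h' r' =>
        have hk1 : s(b, c) ∈ K := hh _ (by simp)
        have hk1' : s(b, c') ∈ K := hh' _ (by simp)
        have hcc : c = c' := Sym2.congr_right.mp
          (hK.2 b s(b, c) hk1 s(b, c') hk1' (by simp) (by simp))
        subst hcc
        cases r with
        | nil => exact absurd (by simp : u ∈ s(b, u)) (hf s(b, u) hk1)
        | @cons _ d _ h₂ t =>
          cases r' with
          | nil => exact absurd (by simp : u' ∈ s(b, u')) (hf' s(b, u') hk1)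
          | @cons _ d' _ h₂' t' =>
            have hq_edges : (Walk.cons h (Walk.cons h₂ t)).edges
                = s(b, c) :: s(c, d) :: t.edges := by simp
            have hq'_edges : (Walk.cons h' (Walk.cons h₂' t')).edges
                = s(b, c) :: s(c, d') :: t'.edges := by simp
            rw [hq_edges] at hc hm
            rw [hq'_edges] at hc' hm'
            have h2n : s(c, d) ∉ K := by
              have := (List.isChain_cons_cons.mp hc).1; tauto
            have h2n' : s(c, d') ∉ K := by
              have := (List.isChain_cons_cons.mp hc').1; tauto
            have h2N : s(c, d) ∈ N := (hm _ (by simp)).resolve_left h2n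
            have h2N' : s(c, d') ∈ N := (hm' _ (by simp)).resolve_left h2n'
            have hdd : d = d' := Sym2.congr_right.mp
              (hN.2 c s(c, d) h2N s(c, d') h2N' (by simp) (by simp))
            subst hdd
            have hct : List.Chain' (fun x y => (x ∈ K ↔ y ∉ K)) (s(c, d) :: t.edges) :=
              (List.isChain_cons_cons.mp hc).2
            have hct' : List.Chain' (fun x y => (x ∈ K ↔ y ∉ K)) (s(c, d) :: t'.edges) :=
              (List.isChain_cons_cons.mp hc').2
            cases t with
            | nil =>
              -- u = d
              cases t' with
              | nil => rfl
              | @cons _ z _ h₃ t'' =>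
                exfalso
                have : s(u, z) ∈ K := by
                  have := (List.isChain_cons_cons.mp hct').1
                  tauto
                exact hf s(u, z) this (by simp)
            | @cons _ z _ h₃ t'' =>
              cases t' with
              | nil =>
                exfalso
                have : s(u', z) ∈ K := by
                  have := (List.isChain_cons_cons.mp hct).1
                  tauto
                exact hf' s(u', z) this (by simp)
              | @cons _ z' _ h₃' t''' =>
                apply ih (Walk.cons h₃ t'') (Walk.cons h₃' t''')
                · simp only [Walk.length_cons] at hlen ⊢; omega
                · exact hct.tail
                · exact hct'.tail
                · intro e hee; exact hm e (by simp at hee ⊢; tauto)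
                · intro e hee; exact hm' e (by simp at hee ⊢; tauto)
                · intro e hee
                  simp only [Walk.edges_cons, List.head?_cons, Option.some_inj] at hee
                  subst hee
                  have := (List.isChain_cons_cons.mp hct).1
                  tauto
                · intro e hee
                  simp only [Walk.edges_cons, List.head?_cons, Option.some_inj] at hee
                  subst hee
                  have := (List.isChain_cons_cons.mp hct').1
                  tauto
                · simp
                · simp
                · exact hf
                · exact hf'

end covdet
section walklem
variable {G : SimpleGraph V}

lemma walklem {N : Set (Sym2 V)} (hN : IsMatching G N) :
    ∀ (n : ℕ) {K : Set (Sym2 V)}, IsMatching G K → (∀ e ∈ K, e ∈ N → False) → K.ncard ≤ n →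
    ∀ {x y : V}, s(x, y) ∈ N → IsFree K x →
    ∃ (b : V) (p : G.Walk x b),
      p.IsPath ∧
      List.Chain' (fun e₁ e₂ => (e₁ ∈ K ↔ e₂ ∉ K)) p.edges ∧
      (∀ e ∈ p.edges, e ∈ K ∪ N) ∧
      p.edges.head? = some s(x, y) ∧
      ((IsFree K b ∧ (∀ e, p.edges.getLast? = some e → e ∉ K)) ∨
       (IsFree N b ∧ (∃ e, p.edges.getLast? = some e ∧ e ∈ K))) := by
  have main : ∀ (n : ℕ), (∀ {K : Set (Sym2 V)}, IsMatching G K → (∀ e ∈ K, e ∈ N → False) →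
      K.ncard + 1 ≤ n →
      ∀ {x y : V}, s(x, y) ∈ N → IsFree K x →
      ∃ (b : V) (p : G.Walk x b),
        p.IsPath ∧
        List.Chain' (fun e₁ e₂ => (e₁ ∈ K ↔ e₂ ∉ K)) p.edges ∧
        (∀ e ∈ p.edges, e ∈ K ∪ N) ∧
        p.edges.head? = some s(x, y) ∧
        ((IsFree K b ∧ (∀ e, p.edges.getLast? = some e → e ∉ K)) ∨
         (IsFree N b ∧ (∃ e, p.edges.getLast? = some e ∧ e ∈ K)))) →
      ∀ {K : Set (Sym2 V)}, IsMatching G K → (∀ e ∈ K, e ∈ N → False) → K.ncard ≤ n →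
      ∀ {x y : V}, s(x, y) ∈ N → IsFree K x →
      ∃ (b : V) (p : G.Walk x b),
        p.IsPath ∧
        List.Chain' (fun e₁ e₂ => (e₁ ∈ K ↔ e₂ ∉ K)) p.edges ∧
        (∀ e ∈ p.edges, e ∈ K ∪ N) ∧
        p.edges.head? = some s(x, y) ∧
        ((IsFree K b ∧ (∀ e, p.edges.getLast? = some e → e ∉ K)) ∨
         (IsFree N b ∧ (∃ e, p.edges.getLast? = some e ∧ e ∈ K))) := by
    intro n ih K hK hd hle x y hxyN hxfree
    have hadj : G.Adj x y := (G.mem_edgeSet).mp (hN.1 hxyN)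
    have hxyne : x ≠ y := G.ne_of_adj hadj
    by_cases hyfree : IsFree K y
    · -- augmenting single-edge extension: stop at y
      refine ⟨y, Walk.cons hadj Walk.nil, ?_, ?_, ?_, ?_, Or.inl ⟨hyfree, ?_⟩⟩
      · simp [Walk.isPath_def, hxyne]
      · simp [List.Chain']
      · intro e he
        simp only [Walk.edges_cons, Walk.edges_nil, List.mem_singleton] at he
        subst he
        exact Or.inr hxyN
      · simp
      · intro e he
        simp only [Walk.edges_cons, Walk.edges_nil, List.getLast?_singleton,
          Option.some_inj] at he
        subst he
        exact fun hik => hd _ hik hxyN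
    · -- y is matched in K by some edge s(y,z)
      obtain ⟨f, hfK, hyf⟩ := not_free_iff.mp hyfree
      obtain ⟨z, rfl⟩ := Sym2.mem_iff_exists.mp hyf
      have hyzadj : G.Adj y z := (G.mem_edgeSet).mp (hK.1 hfK)
      have hyzne : y ≠ z := G.ne_of_adj hyzadj
      have hzx : z ≠ x := by
        rintro rfl
        exact hxfree s(y, z) hfK (by simp)
      have hyzK : s(y, z) ∉ N := fun h => hd _ hfK h
      set K' : Set (Sym2 V) := K \ {s(y, z)} with hK'def
      have hK' : IsMatching G K' := matching_subset hK Set.diff_subset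
      have hd' : ∀ e ∈ K', e ∈ N → False := fun e he => hd e he.1
      have hK'card : K'.ncard + 1 = K.ncard :=
        Set.ncard_diff_singleton_add_one hfK (Set.toFinite K)
      have hle' : K'.ncard + 1 ≤ n := by omega
      have hzfree' : IsFree K' z := by
        intro e he hze
        exact he.2 (hK.2 z e he.1 s(y, z) hfK hze (by simp))
      by_cases hzNfree : IsFree N z
      · -- dead end  x - y - z with z exposed in N
        refine ⟨z, Walk.cons hadj (Walk.cons hyzadj Walk.nil), ?_, ?_, ?_, ?_,
          Or.inr ⟨hzNfree, s(y, z), ?_, hfK⟩⟩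
        · simp [Walk.isPath_def, hxyne, hzx.symm, hyzne]
        · simp only [Walk.edges_cons, Walk.edges_nil, List.Chain', List.isChain_cons_cons,
            List.isChain_singleton, and_true]
          have : s(x, y) ∉ K := fun h => hd _ h hxyN
          tauto
        · intro e he
          simp only [Walk.edges_cons, Walk.edges_nil, List.mem_cons,
            List.mem_singleton] at he
          rcases he with rfl | rfl | h
          · exact Or.inr hxyN
          · exact Or.inl hfK
          · exact absurd h List.not_mem_nil
        · simp
        · simp
      · -- continue the walk from z along an N edge
        obtain ⟨g, hgN, hzg⟩ := not_free_iff.mp hzNfree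
        obtain ⟨w, rfl⟩ := Sym2.mem_iff_exists.mp hzg
        obtain ⟨b, p', hp'path, hp'chain, hp'mem, hp'head, hp'res⟩ :=
          ih hK' hd' hle' hgN hzfree'
        have hp'ne : p'.edges ≠ [] := by
          intro h; rw [h] at hp'head; simp at hp'head
        have hzb : z ≠ b := path_ends_ne hp'path hp'ne
        have hyK'N : ∀ e, e ∈ K' ∪ N → y ∈ e → e = s(x, y) := by
          rintro e (heK' | heN) hye
          · exact absurd (hK.2 y e heK'.1 s(y, z) hfK hye (by simp)) heK'.2
          · exact hN.2 y e heN s(x, y) hxyN hye (by simp)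
        have hxK'N : ∀ e, e ∈ K' ∪ N → x ∈ e → e = s(x, y) := by
          rintro e (heK' | heN) hxe
          · exact absurd hxe (hxfree e heK'.1)
          · exact hN.2 x e heN s(x, y) hxyN hxe (by simp)
        have hsxy_not : s(x, y) ∉ p'.edges := by
          intro hmem
          have hysupp : y ∈ p'.support := p'.snd_mem_support_of_mem_edges hmem
          have hxsupp : x ∈ p'.support := p'.fst_mem_support_of_mem_edges hmem
          by_cases hyb : y = b
          · rcases hp'res with ⟨hbfree, hlK⟩ | ⟨hbNfree, el, hel, helK⟩
            · -- y = b endpoint; then x must be internal: contradiction via two_edges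
              obtain ⟨e₁, he₁, e₂, he₂, hne, hx₁, hx₂⟩ :=
                two_edges p' hp'path hxsupp hzx.symm (fun h => hxyne (h.trans hyb.symm))
              exact hne ((hxK'N e₁ (hp'mem e₁ he₁) hx₁).trans
                (hxK'N e₂ (hp'mem e₂ he₂) hx₂).symm)
            · exact hbNfree s(x, y) hxyN (by simp [← hyb])
          · -- y internal: two distinct incident edges, both forced equal
            obtain ⟨e₁, he₁, e₂, he₂, hne, hy₁, hy₂⟩ :=
              two_edges p' hp'path hysupp hyzne hyb
            exact hne ((hyK'N e₁ (hp'mem e₁ he₁) hy₁).trans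
              (hyK'N e₂ (hp'mem e₂ he₂) hy₂).symm)
        have hynp : y ∉ p'.support := by
          intro hy
          obtain ⟨e, hee, hye⟩ := walk_edge_of_support p' hy hyzne
          exact hsxy_not ((hyK'N e (hp'mem e hee) hye) ▸ hee)
        have hxnp : x ∉ p'.support := by
          intro hxs
          obtain ⟨e, hee, hxe⟩ := walk_edge_of_support p' hxs hzx.symm
          exact hsxy_not ((hxK'N e (hp'mem e hee) hxe) ▸ hee)
        have htransfer : ∀ e ∈ p'.edges, (e ∈ K' ↔ e ∈ K) := by
          intro e he
          constructor
          · exact fun h => h.1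
          · intro heK
            refine ⟨heK, ?_⟩
            rintro rfl
            exact hynp (p'.fst_mem_support_of_mem_edges he)
        have hxyK : s(x, y) ∉ K := fun h => hd _ h hxyN
        refine ⟨b, Walk.cons hadj (Walk.cons hyzadj p'), ?_, ?_, ?_, ?_, ?_⟩
        · exact ((hp'path.cons hynp).cons (by
            simp only [Walk.support_cons, List.mem_cons]
            push_neg
            exact ⟨hxyne, hxnp⟩))
        · simp only [Walk.edges_cons]
          simp only [List.Chain']; rw [List.isChain_cons_cons]
          constructor
          · tauto
          · rw [List.isChain_cons]
            constructor
            · intro e he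
              rw [hp'head] at he
              simp only [Option.mem_def, Option.some_inj] at he
              subst he
              have : s(z, w) ∉ K := fun h => hd _ h hgN
              tauto
            · exact (chain_iff_of_agree htransfer).mp hp'chain
        · intro e he
          simp only [Walk.edges_cons, List.mem_cons] at he
          rcases he with rfl | rfl | h
          · exact Or.inr hxyN
          · exact Or.inl hfK
          · rcases hp'mem e h with h' | h'
            · exact Or.inl h'.1
            · exact Or.inr h'
        · simp
        · have hlast_eq : (Walk.cons hadj (Walk.cons hyzadj p')).edges.getLast?
              = p'.edges.getLast? := by
            simp only [Walk.edges_cons]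
            rw [getLast?_cons_ne _ (by simp [hp'ne]), getLast?_cons_ne _ hp'ne]
          rcases hp'res with ⟨hbfree, hlK⟩ | ⟨hbNfree, el, hel, helK⟩
          · refine Or.inl ⟨?_, ?_⟩
            · intro e heK hbe
              by_cases hef : e = s(y, z)
              · subst hef
                rcases Sym2.mem_iff.mp hbe with rfl | rfl
                · exact hynp (Walk.end_mem_support p')
                · exact hzb rfl
              · exact hbfree e ⟨heK, hef⟩ hbe
            · intro e he
              rw [hlast_eq] at he
              intro heK
              exact hlK e he ((htransfer e (List.mem_of_mem_getLast? he)).mpr heK)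
          · exact Or.inr ⟨hbNfree, el, by rw [hlast_eq]; exact hel, helK.1⟩
  intro n
  induction n with
  | zero =>
    intro K hK hd hle x y hxyN hxfree
    refine main 0 ?_ hK hd hle hxyN hxfree
    intro K' hK' hd' hle'
    omega
  | succ n ih =>
    intro K hK hd hle x y hxyN hxfree
    exact main (n + 1) (fun {K'} hK' hd' hle' {x y} h1 h2 => ih hK' hd' (by omega) h1 h2)
      hK hd hle hxyN hxfree

end walklem
section one
variable {G : SimpleGraph V}

lemma one {K N : Set (Sym2 V)} (hK : IsMatching G K) (hN : IsMatching G N)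
    (hlt : K.ncard < N.ncard) :
    ∃ (a b : V) (p : G.Walk a b), IsAugPath K p ∧ ∀ e ∈ p.edges, e ∈ symmDiff K N := by
  classical
  set K₀ : Set (Sym2 V) := K \ N with hK₀def
  set N₀ : Set (Sym2 V) := N \ K with hN₀def
  have hK₀ : IsMatching G K₀ := matching_subset hK Set.diff_subset
  have hN₀ : IsMatching G N₀ := matching_subset hN Set.diff_subset
  have hd : ∀ e ∈ K₀, e ∈ N₀ → False := fun e he he' => he.2 he'.1
  have hcard : K₀.ncard < N₀.ncard := by
    have h1 := Set.ncard_inter_add_ncard_diff_eq_ncard K N (Set.toFinite K)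
    have h2 := Set.ncard_inter_add_ncard_diff_eq_ncard N K (Set.toFinite N)
    rw [Set.inter_comm] at h2
    simp only [hK₀def, hN₀def]
    omega
  set SC : Set V := {v | ∃ e ∈ N₀, v ∈ e} with hSCdef
  set TC : Set V := {v | ∃ e ∈ K₀, v ∈ e} with hTCdef
  set S : Set V := SC \ TC with hSdef
  set T : Set V := TC \ SC with hTdef
  have hSC : SC.ncard = 2 * N₀.ncard := cov_ncard N₀.ncard le_rfl hN₀
  have hTC : TC.ncard = 2 * K₀.ncard := cov_ncard K₀.ncard le_rfl hK₀
  have hST : T.ncard < S.ncard := by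
    have h1 := Set.ncard_inter_add_ncard_diff_eq_ncard SC TC (Set.toFinite SC)
    have h2 := Set.ncard_inter_add_ncard_diff_eq_ncard TC SC (Set.toFinite TC)
    rw [Set.inter_comm] at h2
    simp only [hSdef, hTdef]
    omega
  have hSwalk : ∀ x, x ∈ S → ∃ (b : V) (p : G.Walk x b),
      p.IsPath ∧
      List.Chain' (fun e₁ e₂ => (e₁ ∈ K₀ ↔ e₂ ∉ K₀)) p.edges ∧
      (∀ e ∈ p.edges, e ∈ K₀ ∪ N₀) ∧
      (∃ y, p.edges.head? = some s(x, y) ∧ s(x, y) ∈ N₀) ∧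
      ((IsFree K₀ b ∧ (∀ e, p.edges.getLast? = some e → e ∉ K₀)) ∨
       (IsFree N₀ b ∧ (∃ e, p.edges.getLast? = some e ∧ e ∈ K₀))) := by
    intro x hx
    obtain ⟨⟨e, heN₀, hxe⟩, hxT⟩ := hx
    obtain ⟨y, rfl⟩ := Sym2.mem_iff_exists.mp hxe
    have hxfree : IsFree K₀ x := by
      intro f hf hxf
      exact hxT ⟨f, hf, hxf⟩
    obtain ⟨b, p, h1, h2, h3, h4, h5⟩ :=
      walklem hN₀ K₀.ncard hK₀ hd le_rfl heN₀ hxfree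
    exact ⟨b, p, h1, h2, h3, ⟨y, h4, heN₀⟩, h5⟩
  by_cases hex : ∃ x, x ∈ S ∧ ∃ (b : V) (p : G.Walk x b),
      p.IsPath ∧
      List.Chain' (fun e₁ e₂ => (e₁ ∈ K₀ ↔ e₂ ∉ K₀)) p.edges ∧
      (∀ e ∈ p.edges, e ∈ K₀ ∪ N₀) ∧
      (∃ y, p.edges.head? = some s(x, y) ∧ s(x, y) ∈ N₀) ∧
      IsFree K₀ b ∧ (∀ e, p.edges.getLast? = some e → e ∉ K₀)
  · obtain ⟨x, hxS, b, p, hpath, hchain, hmem, ⟨y, hhead, hxyN₀⟩, hbfree, hlastK⟩ := hex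
    have hagree : ∀ e ∈ p.edges, (e ∈ K₀ ↔ e ∈ K) := by
      intro e he
      rcases hmem e he with h | h
      · simp [h, h.1]
      · constructor
        · intro h'
          exact absurd h'.1 h.2
        · intro h'
          exact absurd h' h.2
    have hne : p.edges ≠ [] := by
      intro h; rw [h] at hhead; simp at hhead
    have hxb : x ≠ b := path_ends_ne hpath hne
    have hxfreeS : IsFree K₀ x := fun f hf hxf => hxS.2 ⟨f, hf, hxf⟩
    have hlastN₀ : ∃ el, p.edges.getLast? = some el ∧ el ∈ N₀ ∧ b ∈ el := by
      obtain ⟨el, hel⟩ := Option.ne_none_iff_exists'.mp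
        (fun h => hne (List.getLast?_eq_none_iff.mp h))
      refine ⟨el, hel, ?_, end_mem_getLast p el hel⟩
      rcases hmem el (List.mem_of_mem_getLast? hel) with h | h
      · exact absurd h (hlastK el hel)
      · exact h
    refine ⟨x, b, p, ⟨⟨hpath, ?_⟩, ?_, ?_, hxb, ?_, ?_⟩, ?_⟩
    · exact (chain_iff_of_agree hagree).mp hchain
    · -- IsFree K x
      intro f hfK hxf
      by_cases hfN : f ∈ N
      · have : f = s(x, y) := hN.2 x f hfN s(x, y) hxyN₀.1 hxf (by simp)
        exact hxyN₀.2 (this ▸ hfK)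
      · exact hxfreeS f ⟨hfK, hfN⟩ hxf
    · -- IsFree K b
      intro f hfK hbf
      obtain ⟨el, hel, helN₀, hbel⟩ := hlastN₀
      by_cases hfN : f ∈ N
      · have : f = el := hN.2 b f hfN el helN₀.1 hbf hbel
        exact helN₀.2 (this ▸ hfK)
      · exact hbfree f ⟨hfK, hfN⟩ hbf
    · -- head not in K
      intro e he
      rw [hhead] at he
      have := Option.some_inj.mp he
      subst this
      exact fun h => hxyN₀.2 h
    · -- last not in K
      intro e he
      intro heK
      exact hlastK e he ((hagree e (List.mem_of_mem_getLast? he)).mpr heK)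
    · intro e he
      rw [Set.mem_symmDiff]
      rcases hmem e he with h | h
      · exact Or.inl ⟨h.1, h.2⟩
      · exact Or.inr ⟨h.1, h.2⟩
  · -- all dead: build injection S → T, contradiction
    have hall : ∀ x, x ∈ S → ∃ (b : V) (p : G.Walk x b),
        p.IsPath ∧
        List.Chain' (fun e₁ e₂ => (e₁ ∈ K₀ ↔ e₂ ∉ K₀)) p.edges ∧
        (∀ e ∈ p.edges, e ∈ K₀ ∪ N₀) ∧
        (∃ y, p.edges.head? = some s(x, y) ∧ s(x, y) ∈ N₀) ∧
        IsFree N₀ b ∧ (∃ e, p.edges.getLast? = some e ∧ e ∈ K₀) := by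
      intro x hx
      obtain ⟨b, p, h1, h2, h3, h4, h5⟩ := hSwalk x hx
      rcases h5 with h5 | h5
      · exact absurd ⟨x, hx, b, p, h1, h2, h3, h4, h5⟩ hex
      · exact ⟨b, p, h1, h2, h3, h4, h5⟩
    choose fb fp h1 h2 h3 h4 h5 h6 using hall
    set F : V → V := fun x => if hx : x ∈ S then fb x hx else x with hFdef
    have hmaps : Set.MapsTo F S T := by
      intro x hx
      obtain ⟨el, hel, helK₀⟩ := h6 x hx
      have hbel : fb x hx ∈ el := end_mem_getLast _ el hel
      constructor
      · simp only [hFdef, dif_pos hx]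
        exact ⟨el, helK₀, hbel⟩
      · simp only [hFdef, dif_pos hx]
        intro ⟨f, hfN₀, hbf⟩
        exact (h5 x hx) f hfN₀ hbf
    have hinj : Set.InjOn F S := by
      intro x hx x' hx' hFeq
      simp only [hFdef, dif_pos hx, dif_pos hx'] at hFeq
      have hxfree : IsFree K₀ x := fun f hf hxf => hx.2 ⟨f, hf, hxf⟩
      have hx'free : IsFree K₀ x' := fun f hf hxf => hx'.2 ⟨f, hf, hxf⟩
      obtain ⟨el, hel, helK₀⟩ := h6 x hx
      obtain ⟨el', hel', helK₀'⟩ := h6 x' hx'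
      obtain ⟨y, hhy, _⟩ := h4 x hx
      obtain ⟨y', hhy', _⟩ := h4 x' hx'
      have hpne : (fp x hx).edges ≠ [] := by
        intro h; rw [h] at hhy; simp at hhy
      have hpne' : (fp x' hx').edges ≠ [] := by
        intro h; rw [h] at hhy'; simp at hhy'
      have hflip : ∀ {u v : V} (q : G.Walk u v),
          List.Chain' (fun e₁ e₂ => (e₁ ∈ K₀ ↔ e₂ ∉ K₀)) q.edges →
          List.Chain' (fun e₁ e₂ => (e₁ ∈ K₀ ↔ e₂ ∉ K₀)) q.reverse.edges := by
        intro u v q hq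
        rw [Walk.edges_reverse]; simp only [List.Chain']; rw [List.isChain_reverse]
        exact hq.imp (fun a b hab => by tauto)
      have hp''eq : ((fp x' hx').copy rfl hFeq.symm).edges = (fp x' hx').edges :=
        Walk.edges_copy _ rfl hFeq.symm
      refine det hK₀ hN₀ hd (fp x hx).reverse.length (fp x hx).reverse
        ((fp x' hx').copy rfl hFeq.symm).reverse le_rfl
        (hflip _ (h2 x hx)) (hflip _ (by rw [hp''eq]; exact h2 x' hx'))
        (fun e he => h3 x hx e (by rwa [Walk.edges_reverse, List.mem_reverse] at he))
        (fun e he => h3 x' hx' e (by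
          rw [Walk.edges_reverse, List.mem_reverse, hp''eq] at he; exact he))
        ?_ ?_ ?_ ?_ hxfree hx'free
      · intro e he
        rw [Walk.edges_reverse, List.head?_reverse, hel] at he
        exact (Option.some_inj.mp he) ▸ helK₀
      · intro e he
        rw [Walk.edges_reverse, List.head?_reverse, hp''eq, hel'] at he
        exact (Option.some_inj.mp he) ▸ helK₀'
      · rw [Walk.edges_reverse]; simpa using hpne
      · rw [Walk.edges_reverse]; simp only [hp''eq]; simpa using hpne'
    have := Set.ncard_le_ncard_of_injOn F hmaps hinj (Set.toFinite T)
    omega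

end one
section maincount
variable {G : SimpleGraph V}

lemma main_count {M N : Set (Sym2 V)} (hN : IsMatching G N) (L : ℕ)
    (hmin : ∀ (a b : V) (p : G.Walk a b), IsAugPath M p → L ≤ p.length) :
    ∀ (d : ℕ) (K : Set (Sym2 V)), IsMatching G K →
      symmDiff K N ⊆ symmDiff M N → K \ N ⊆ M → (∀ v, IsFree K v → IsFree M v) →
      K.ncard + d ≤ N.ncard → d * L ≤ (symmDiff K N).ncard := by
  intro d
  induction d with
  | zero => simp
  | succ d ih =>
    intro K hK hsub hKN hfree hcard
    obtain ⟨a, b, p, haug, hedges⟩ := one hK hN (by omega)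
    have hagree : ∀ e ∈ p.edges, (e ∈ K ↔ e ∈ M) := by
      intro e he
      have h1 : e ∈ symmDiff K N := hedges e he
      have h2 : e ∈ symmDiff M N := hsub h1
      rw [Set.mem_symmDiff] at h1 h2
      constructor
      · intro heK
        rcases h1 with h | h
        · exact hKN ⟨heK, h.2⟩
        · exact absurd heK h.2
      · intro heM
        rcases h1 with h | h
        · exact h.1
        · rcases h2 with h' | h'
          · exact absurd h.1 h'.2
          · exact absurd heM h'.2
    have hMaug : IsAugPath M p := by
      obtain ⟨⟨hpath, hchain⟩, ha, hb, hab, hh, hl⟩ := haug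
      refine ⟨⟨hpath, (chain_iff_of_agree hagree).mp hchain⟩, hfree a ha, hfree b hb, hab,
        ?_, ?_⟩
      · exact fun e he hM' => hh e he ((hagree e (List.mem_of_mem_head? he)).mpr hM')
      · exact fun e he hM' => hl e he ((hagree e (List.mem_of_mem_getLast? he)).mpr hM')
    have hlen : L ≤ p.length := hmin a b p hMaug
    obtain ⟨am1, am2, am3, am4, am5⟩ := augMaster p.length hK p le_rfl haug
    have hsubE : {e | e ∈ p.edges} ⊆ symmDiff K N := fun e he => hedges e he
    have hK₁N : symmDiff (symmDiff K {e | e ∈ p.edges}) N = (symmDiff K N) \ {e | e ∈ p.edges} := by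
      rw [symmDiff_right_comm]
      ext x
      rw [Set.mem_symmDiff]
      simp only [Set.mem_diff, Set.mem_setOf_eq]
      have hx := fun hxE => hedges x hxE
      constructor
      · rintro (h | h)
        · exact ⟨h.1, h.2⟩
        · exact absurd (hx h.1) h.2
      · rintro ⟨h1, h2⟩
        exact Or.inl ⟨h1, h2⟩
    have hEcard : {e | e ∈ p.edges}.ncard = p.length := by
      rw [ncard_list_set haug.1.1.edges_nodup, Walk.length_edges]
    have hcardeq : (symmDiff (symmDiff K {e | e ∈ p.edges}) N).ncard + p.length
        = (symmDiff K N).ncard := by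
      rw [hK₁N, ← hEcard]
      have h1 := Set.ncard_diff hsubE (Set.toFinite _)
      have h2 := Set.ncard_le_ncard hsubE (Set.toFinite _)
      omega
    have hKN₁ : symmDiff K {e | e ∈ p.edges} \ N ⊆ M := by
      rintro e ⟨he, heN⟩
      rw [Set.mem_symmDiff] at he
      rcases he with h | h
      · exact hKN ⟨h.1, heN⟩
      · have := hsubE h.1
        rw [Set.mem_symmDiff] at this
        rcases this with h' | h'
        · exact absurd h'.1 h.2
        · exact absurd h'.1 heN
    have ihres := ih (symmDiff K {e | e ∈ p.edges}) am1
      (by rw [hK₁N]; exact fun e he => hsub he.1)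
      hKN₁
      (fun v hv => hfree v ((am3 v).mp hv).1)
      (by omega)
    have : (d + 1) * L = d * L + L := by ring
    omega

end maincount
section fam
variable {G : SimpleGraph V}

lemma edge_support_share {a b c d : V} {p : G.Walk a b} {q : G.Walk c d} {e : Sym2 V}
    (hp : e ∈ p.edges) (hq : e ∈ q.edges) : ∃ v, v ∈ p.support ∧ v ∈ q.support := by
  induction e using Sym2.ind with
  | _ x y => exact ⟨x, p.fst_mem_support_of_mem_edges hp, q.fst_mem_support_of_mem_edges hq⟩

lemma fam {M : Set (Sym2 V)} (hM : IsMatching G M) (ℓ k : ℕ)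
    (A : Fin k → (a : V) × (b : V) × G.Walk a b)
    (hA : ∀ i, IsAugPath M (A i).2.2 ∧ (A i).2.2.length = 2 * ℓ + 1)
    (hdisj : ∀ i j, i ≠ j → ∀ v ∈ (A i).2.2.support, v ∉ (A j).2.2.support) :
    ∀ (j : ℕ), j ≤ k →
      IsMatching G (symmDiff M {e | ∃ i : Fin k, (i : ℕ) < j ∧ e ∈ (A i).2.2.edges}) ∧
      (symmDiff M {e | ∃ i : Fin k, (i : ℕ) < j ∧ e ∈ (A i).2.2.edges}).ncard = M.ncard + j ∧
      (∀ v, IsFree (symmDiff M {e | ∃ i : Fin k, (i : ℕ) < j ∧ e ∈ (A i).2.2.edges}) v ↔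
        (IsFree M v ∧ ∀ i : Fin k, (i : ℕ) < j → v ∉ (A i).2.2.support)) ∧
      {e | ∃ i : Fin k, (i : ℕ) < j ∧ e ∈ (A i).2.2.edges}.ncard = j * (2 * ℓ + 1) := by
  intro j
  induction j with
  | zero =>
    intro _
    have hempty : {e : Sym2 V | ∃ i : Fin k, (i : ℕ) < 0 ∧ e ∈ (A i).2.2.edges} = ∅ := by
      ext e; simp
    rw [hempty]
    have hsd : symmDiff M (∅ : Set (Sym2 V)) = M := by
      ext e; rw [Set.mem_symmDiff]; simp
    rw [hsd]
    exact ⟨hM, by simp, fun v => by simp, by simp⟩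
  | succ j ih =>
    intro hjk
    obtain ⟨ih1, ih2, ih3, ih4⟩ := ih (by omega)
    set i₀ : Fin k := ⟨j, by omega⟩ with hi₀def
    have hi₀val : (i₀ : ℕ) = j := rfl
    set Uj : Set (Sym2 V) := {e | ∃ i : Fin k, (i : ℕ) < j ∧ e ∈ (A i).2.2.edges} with hUjdef
    set E : Set (Sym2 V) := {e | e ∈ (A i₀).2.2.edges} with hEdef
    have hsplit : {e : Sym2 V | ∃ i : Fin k, (i : ℕ) < j + 1 ∧ e ∈ (A i).2.2.edges}
        = Uj ∪ E := by
      ext e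
      simp only [hUjdef, hEdef, Set.mem_setOf_eq, Set.mem_union]
      constructor
      · rintro ⟨i, hij, hie⟩
        by_cases hij' : (i : ℕ) < j
        · exact Or.inl ⟨i, hij', hie⟩
        · have : i = i₀ := Fin.ext (by omega)
          exact Or.inr (this ▸ hie)
      · rintro (⟨i, hij, hie⟩ | hie)
        · exact ⟨i, by omega, hie⟩
        · exact ⟨i₀, by omega, hie⟩
    have hdisjUE : ∀ e ∈ E, e ∉ Uj := by
      rintro e he ⟨i, hij, hie⟩
      have hne : i ≠ i₀ := by
        intro h; rw [h] at hij; omega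
      obtain ⟨v, hv1, hv2⟩ := edge_support_share hie he
      exact hdisj i i₀ hne v hv1 hv2
    have hagree : ∀ e ∈ (A i₀).2.2.edges, (e ∈ symmDiff M Uj ↔ e ∈ M) := by
      intro e he
      have heU : e ∉ Uj := hdisjUE e he
      rw [Set.mem_symmDiff]
      constructor
      · rintro (h | h)
        · exact h.1
        · exact absurd h.1 heU
      · intro h
        exact Or.inl ⟨h, heU⟩
    have hUfin : E.ncard = 2 * ℓ + 1 := by
      rw [hEdef, ncard_list_set (hA i₀).1.1.1.edges_nodup, Walk.length_edges, (hA i₀).2]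
    have haug : IsAugPath (symmDiff M Uj) (A i₀).2.2 := by
      obtain ⟨⟨hpath, hchain⟩, ha, hb, hab, hh, hl⟩ := (hA i₀).1
      refine ⟨⟨hpath, (chain_iff_of_agree (fun e he => (hagree e he))).mpr hchain⟩, ?_, ?_,
        hab, ?_, ?_⟩
      · rw [ih3]
        refine ⟨ha, fun i hij hmem => ?_⟩
        have hne : i ≠ i₀ := by
          intro h; rw [h] at hij; omega
        exact hdisj i₀ i hne.symm _ (Walk.start_mem_support _) hmem
      · rw [ih3]
        refine ⟨hb, fun i hij hmem => ?_⟩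
        have hne : i ≠ i₀ := by
          intro h; rw [h] at hij; omega
        exact hdisj i₀ i hne.symm _ (Walk.end_mem_support _) hmem
      · exact fun e he hmem => hh e he ((hagree e (List.mem_of_mem_head? he)).mp hmem)
      · exact fun e he hmem => hl e he ((hagree e (List.mem_of_mem_getLast? he)).mp hmem)
    obtain ⟨am1, am2, am3, am4, am5⟩ :=
      augMaster (A i₀).2.2.length ih1 (A i₀).2.2 le_rfl haug
    have hkey : symmDiff M (Uj ∪ E) = symmDiff (symmDiff M Uj) E := by
      have hun : Uj ∪ E = symmDiff Uj E := by
        ext x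
        rw [Set.mem_symmDiff]
        have := fun hx => hdisjUE x hx
        simp only [Set.mem_union]
        tauto
      rw [hun, ← symmDiff_assoc]
    have hUcard : (Uj ∪ E).ncard = Uj.ncard + E.ncard := by
      rw [Set.ncard_union_eq (Set.disjoint_right.mpr hdisjUE) (Set.toFinite _) (Set.toFinite _)]
    rw [hsplit, hkey]
    refine ⟨am1, by rw [am2, ih2]; ring, ?_, ?_⟩
    · intro v
      rw [am3 v, ih3 v]
      constructor
      · rintro ⟨⟨h1, h2⟩, h3⟩
        refine ⟨h1, fun i hij hmem => ?_⟩
        by_cases hij' : (i : ℕ) < j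
        · exact h2 i hij' hmem
        · have : i = i₀ := Fin.ext (by omega)
          exact h3 (this ▸ hmem)
      · rintro ⟨h1, h2⟩
        exact ⟨⟨h1, fun i hij hmem => h2 i (by omega) hmem⟩,
          fun hmem => h2 i₀ (by omega) hmem⟩
    · rw [hUcard, ih4, hUfin]
      ring
end fam

/-- Augmenting along a maximal family of vertex-disjoint shortest augmenting paths
(of length `2ℓ+1`) yields a matching all of whose augmenting paths have length ≥ `2ℓ+3`. -/
theorem stmt2 (G : SimpleGraph V) (M : Set (Sym2 V)) (hM : IsMatching G M) (ℓ : ℕ)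
    (hmin : ∀ (a b : V) (p : G.Walk a b), IsAugPath M p → 2 * ℓ + 1 ≤ p.length)
    (k : ℕ) (A : Fin k → (a : V) × (b : V) × G.Walk a b)
    (hA : ∀ i, IsAugPath M (A i).2.2 ∧ (A i).2.2.length = 2 * ℓ + 1)
    (hdisj : ∀ i j, i ≠ j → ∀ v ∈ (A i).2.2.support, v ∉ (A j).2.2.support)
    (hmaximal : ∀ (a b : V) (p : G.Walk a b), IsAugPath M p → p.length = 2 * ℓ + 1 →
      ∃ i, ∃ v ∈ p.support, v ∈ (A i).2.2.support)
    (M' : Set (Sym2 V)) (hM' : M' = symmDiff M {e | ∃ i, e ∈ (A i).2.2.edges}) :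
    ∀ (a b : V) (p : G.Walk a b), IsAugPath M' p → 2 * ℓ + 3 ≤ p.length := by
  subst hM'
  intro a b p hp
  have hUk : {e : Sym2 V | ∃ i : Fin k, (i : ℕ) < k ∧ e ∈ (A i).2.2.edges}
      = {e : Sym2 V | ∃ i, e ∈ (A i).2.2.edges} := by
    ext e
    simp only [Set.mem_setOf_eq]
    exact ⟨fun ⟨i, _, h⟩ => ⟨i, h⟩, fun ⟨i, h⟩ => ⟨i, i.isLt, h⟩⟩
  have hAall := fam hM ℓ k A hA hdisj k le_rfl
  rw [hUk] at hAall
  obtain ⟨hM'match, hM'card, hM'free, hUcard⟩ := hAall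
  set U : Set (Sym2 V) := {e | ∃ i, e ∈ (A i).2.2.edges} with hUdef
  set Ep : Set (Sym2 V) := {e | e ∈ p.edges} with hEpdef
  -- M'' := symmDiff (symmDiff M U) Ep is a matching of size |M| + k + 1
  obtain ⟨bm1, bm2, bm3, bm4, bm5⟩ := augMaster p.length hM'match p le_rfl hp
  set N : Set (Sym2 V) := symmDiff (symmDiff M U) Ep with hNdef
  have hNcard : N.ncard = M.ncard + k + 1 := by rw [hNdef, bm2, hM'card]
  have hMN : symmDiff M N = symmDiff U Ep := by
    rw [hNdef, symmDiff_assoc, symmDiff_symmDiff_cancel_left]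
  have hcnt := main_count bm1 (2 * ℓ + 1) hmin (k + 1) M hM subset_rfl Set.diff_subset
    (fun v h => h) (by omega)
  rw [hMN] at hcnt
  have hdisj2 : Disjoint (U \ Ep) (Ep \ U) := by
    rw [Set.disjoint_left]
    rintro x ⟨h1, h2⟩ ⟨h3, h4⟩
    exact h2 h3
  have hsdef : symmDiff U Ep = (U \ Ep) ∪ (Ep \ U) := by
    ext x
    rw [Set.mem_symmDiff]
    simp only [Set.mem_union, Set.mem_diff]
  have h7 := Set.ncard_inter_add_ncard_diff_eq_ncard U Ep (Set.toFinite U)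
  have h8 := Set.ncard_inter_add_ncard_diff_eq_ncard Ep U (Set.toFinite Ep)
  have h9 : (Ep ∩ U).ncard = (U ∩ Ep).ncard := by rw [Set.inter_comm]
  have h10 : (symmDiff U Ep).ncard = (U \ Ep).ncard + (Ep \ U).ncard := by
    rw [hsdef, Set.ncard_union_eq hdisj2 (Set.toFinite _) (Set.toFinite _)]
  have hEpcard : Ep.ncard = p.length := by
    rw [hEpdef, ncard_list_set hp.1.1.edges_nodup, Walk.length_edges]
  have hexp : (k + 1) * (2 * ℓ + 1) = k * (2 * ℓ + 1) + (2 * ℓ + 1) := by ring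
  by_cases hshare : ∃ i, ∃ v ∈ p.support, v ∈ (A i).2.2.support
  · -- p shares a vertex with some path, hence an edge: length ≥ 2ℓ+3
    obtain ⟨i, v, hvp, hvA⟩ := hshare
    obtain ⟨_, _, _, cm4, _⟩ := augMaster (A i).2.2.length hM (A i).2.2 le_rfl (hA i).1
    obtain ⟨g, hg, hgM, hvg⟩ := cm4 v hvA
    have hgU : g ∈ U := ⟨i, hg⟩
    have hgM' : g ∈ symmDiff M U := by
      rw [Set.mem_symmDiff]
      exact Or.inr ⟨hgU, hgM⟩
    have hva : v ≠ a := by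
      rintro rfl
      exact hp.2.1 g hgM' hvg
    have hvb : v ≠ b := by
      rintro rfl
      exact hp.2.2.1 g hgM' hvg
    obtain ⟨g', hg', hg'M', hvg'⟩ := bm5 v hvp hva hvb
    have hgg : g = g' := hM'match.2 v g hgM' g' hg'M' hvg hvg'
    have hgEp : g ∈ Ep := by rw [hEpdef]; exact hgg ▸ hg'
    have hI : 0 < (U ∩ Ep).ncard :=
      (Set.ncard_pos (Set.toFinite _)).mpr ⟨g, hgU, hgEp⟩
    omega
  · -- p is disjoint from all paths: it is M-augmenting, apply maximality and parity
    push_neg at hshare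
    have hagree : ∀ e ∈ p.edges, (e ∈ symmDiff M U ↔ e ∈ M) := by
      intro e he
      have heU : e ∉ U := by
        rintro ⟨i, hie⟩
        obtain ⟨v, hv1, hv2⟩ := edge_support_share he hie
        exact hshare i v hv1 hv2
      rw [Set.mem_symmDiff]
      constructor
      · rintro (h | h)
        · exact h.1
        · exact absurd h.1 heU
      · intro h
        exact Or.inl ⟨h, heU⟩
    obtain ⟨⟨hpath, hchain⟩, ha, hb, hab, hh, hl⟩ := hp
    have hpM : IsAugPath M p := by
      refine ⟨⟨hpath, (chain_iff_of_agree hagree).mp hchain⟩, ((hM'free a).mp ha).1,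
        ((hM'free b).mp hb).1, hab, ?_, ?_⟩
      · exact fun e he hM'' => hh e he ((hagree e (List.mem_of_mem_head? he)).mpr hM'')
      · exact fun e he hM'' => hl e he ((hagree e (List.mem_of_mem_getLast? he)).mpr hM'')
    have hge : 2 * ℓ + 1 ≤ p.length := hmin a b p hpM
    have hneq : p.length ≠ 2 * ℓ + 1 := by
      intro heq
      obtain ⟨i, v, hv1, hv2⟩ := hmaximal a b p hpM heq
      exact hshare i v hv1 hv2
    have hne : p.edges ≠ [] := by
      intro h
      have : p.length = 0 := by rw [← Walk.length_edges, h]; rfl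
      omega
    have hodd : Odd p.edges.length :=
      odd_alt_length hne hpM.1.2 hpM.2.2.2.2.1 hpM.2.2.2.2.2
    rw [Walk.length_edges] at hodd
    obtain ⟨m, hm⟩ := hodd
    omega
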